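/- For two machines and any constant number M of parallel ordinal solutions, there exists an integer i with 3 ≤ i ≤ M+3 and an input realization (i−1 jobs of size i followed by i jobs of size i−1, and then zeros) such that every one of the M solutions has makespan at least i(i−1)+1 while the optimal offline makespan equals i(i−1). Consequently the competitive ratio of any M-solution ordinal algorithm on two machines is at least 1 + 1/((M+2)(M+3)). -/

import Mathlib

open Finset

noncomputable def pfun (i : ℕ) : ℕ → ℝ := fun j =>
  if j = 0 then 0 else if j ≤ i - 1 then (i : ℝ) else if j ≤ 2 * i - 1 then (i : ℝ) - 1 else 0

def acnt (i : ℕ) (g : ℕ → Bool) : ℕ :=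
  ((Finset.Icc 1 (i - 1)).filter (fun j => g j = true)).card
def bcnt (i : ℕ) (g : ℕ → Bool) : ℕ :=
  ((Finset.Icc i (2 * i - 1)).filter (fun j => g j = true)).card

def Nload (i : ℕ) (g : ℕ → Bool) : ℕ := acnt i g * i + bcnt i g * (i - 1)

def HasType (g : ℕ → Bool) (i : ℕ) : Prop :=
  (∀ j, 2 ≤ j → j < i → g j = g 1) ∧ g i ≠ g 1

lemma load_eq (i : ℕ) (hi : 3 ≤ i) (g : ℕ → Bool) :
    (∑' j : ℕ, if g (j + 1) then pfun i (j + 1) else 0) = (Nload i g : ℝ) := by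
  have h0 : (∑' j : ℕ, if g (j + 1) then pfun i (j + 1) else 0)
      = ∑ j ∈ Finset.range (2 * i - 1), (if g (j + 1) then pfun i (j + 1) else 0) := by
    apply tsum_eq_sum
    intro b hb
    simp only [Finset.mem_range, not_lt] at hb
    have hp : pfun i (b + 1) = 0 := by
      unfold pfun
      rw [if_neg (by omega), if_neg (by omega), if_neg (by omega)]
    simp [hp]
  rw [h0]
  have h1 : ∑ j ∈ Finset.range (2 * i - 1), (if g (j + 1) then pfun i (j + 1) else 0)
      = ∑ j ∈ Finset.Icc 1 (2 * i - 1), (if g j then pfun i j else 0) := by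
    have e : Finset.Icc 1 (2 * i - 1) = Finset.Ico 1 (2 * i) := by
      rw [← Finset.Ico_add_one_right_eq_Icc]; congr 1; omega
    rw [e, Finset.sum_Ico_eq_sum_range]
    exact Finset.sum_congr rfl (fun j _ => by rw [Nat.add_comm])
  rw [h1]
  have hIoc : Finset.Icc 1 (2 * i - 1) = Finset.Ioc 0 (2 * i - 1) := by
    rw [← Finset.Icc_add_one_left_eq_Ioc]; rfl
  rw [hIoc, ← Finset.sum_Ioc_consecutive _ (show 0 ≤ i - 1 by omega) (show i - 1 ≤ 2 * i - 1 by omega)]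
  have e1 : Finset.Ioc 0 (i - 1) = Finset.Icc 1 (i - 1) := by rw [← Finset.Icc_add_one_left_eq_Ioc]; rfl
  have e2 : Finset.Ioc (i - 1) (2 * i - 1) = Finset.Icc i (2 * i - 1) := by
    rw [← Finset.Icc_add_one_left_eq_Ioc]; congr 1; omega
  rw [e1, e2]
  have hbig : ∑ j ∈ Finset.Icc 1 (i - 1), (if g j then pfun i j else 0)
      = (acnt i g : ℝ) * i := by
    have : ∑ j ∈ Finset.Icc 1 (i - 1), (if g j then pfun i j else 0)
        = ∑ j ∈ Finset.Icc 1 (i - 1), (if g j = true then (i : ℝ) else 0) := by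
      apply Finset.sum_congr rfl
      intro j hj
      simp only [Finset.mem_Icc] at hj
      have hp : pfun i j = (i : ℝ) := by
        unfold pfun; rw [if_neg (by omega), if_pos (by omega)]
      simp [hp]
    rw [this, ← Finset.sum_filter, Finset.sum_const, nsmul_eq_mul]
    rfl
  have hsmall : ∑ j ∈ Finset.Icc i (2 * i - 1), (if g j then pfun i j else 0)
      = (bcnt i g : ℝ) * ((i : ℝ) - 1) := by
    have : ∑ j ∈ Finset.Icc i (2 * i - 1), (if g j then pfun i j else 0)
        = ∑ j ∈ Finset.Icc i (2 * i - 1), (if g j = true then ((i : ℝ) - 1) else 0) := by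
      apply Finset.sum_congr rfl
      intro j hj
      simp only [Finset.mem_Icc] at hj
      have hp : pfun i j = (i : ℝ) - 1 := by
        unfold pfun; rw [if_neg (by omega), if_neg (by omega), if_pos (by omega)]
      simp [hp]
    rw [this, ← Finset.sum_filter, Finset.sum_const, nsmul_eq_mul]
    rfl
  rw [hbig, hsmall]
  unfold Nload
  push_cast [Nat.cast_sub (show 1 ≤ i by omega)]
  ring

lemma acnt_le (i : ℕ) (g : ℕ → Bool) : acnt i g ≤ i - 1 := by
  have := Finset.card_filter_le (Finset.Icc 1 (i - 1)) (fun j => g j = true)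
  simpa [acnt, Nat.card_Icc] using this

lemma bcnt_le (i : ℕ) (hi : 1 ≤ i) (g : ℕ → Bool) : bcnt i g ≤ i := by
  unfold bcnt
  have := Finset.card_filter_le (Finset.Icc i (2 * i - 1)) (fun j => g j = true)
  have hc : (Finset.Icc i (2 * i - 1)).card = i := by rw [Nat.card_Icc]; omega
  omega

lemma acnt_not (i : ℕ) (g : ℕ → Bool) : acnt i g + acnt i (fun j => !g j) = i - 1 := by
  unfold acnt
  have : (Finset.Icc 1 (i - 1)).filter (fun j => (!g j) = true)
      = (Finset.Icc 1 (i - 1)).filter (fun j => ¬ (g j = true)) := by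
    apply Finset.filter_congr; intro j _; simp
  rw [this, Finset.card_filter_add_card_filter_not, Nat.card_Icc]
  omega

lemma bcnt_not (i : ℕ) (hi : 1 ≤ i) (g : ℕ → Bool) :
    bcnt i g + bcnt i (fun j => !g j) = i := by
  unfold bcnt
  have : (Finset.Icc i (2 * i - 1)).filter (fun j => (!g j) = true)
      = (Finset.Icc i (2 * i - 1)).filter (fun j => ¬ (g j = true)) := by
    apply Finset.filter_congr; intro j _; simp
  rw [this, Finset.card_filter_add_card_filter_not, Nat.card_Icc]
  omega

lemma sum_loads (i : ℕ) (hi : 3 ≤ i) (g : ℕ → Bool) :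
    Nload i g + Nload i (fun j => !g j) = 2 * (i * (i - 1)) := by
  unfold Nload
  have ha := acnt_not i g
  have hb := bcnt_not i (by omega) g
  have : acnt i g * i + bcnt i g * (i - 1)
      + (acnt i (fun j => !g j) * i + bcnt i (fun j => !g j) * (i - 1))
      = (acnt i g + acnt i (fun j => !g j)) * i
        + (bcnt i g + bcnt i (fun j => !g j)) * (i - 1) := by ring
  rw [this, ha, hb]
  obtain ⟨j, rfl⟩ : ∃ j, i = j + 1 := ⟨i - 1, by omega⟩
  simp only [Nat.add_sub_cancel]
  ring

lemma balanced (i a b : ℕ) (hi : 3 ≤ i) (ha : a ≤ i - 1) (hb : b ≤ i)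
    (h : a * i + b * (i - 1) = i * (i - 1)) :
    (a = 0 ∧ b = i) ∨ (a = i - 1 ∧ b = 0) := by
  obtain ⟨j, rfl⟩ : ∃ j, i = j + 1 := ⟨i - 1, by omega⟩
  simp only [Nat.add_sub_cancel] at *
  have hj : 2 ≤ j := by omega
  have hd : j ∣ a := by
    have h1eq : (a + b) * j + a = j * (j + 1) := by
      have e : (a + b) * j + a = a * (j + 1) + b * j := by ring
      rw [e, h]; ring
    have h1 : j ∣ (a + b) * j + a := h1eq ▸ Dvd.intro _ rfl
    exact (Nat.dvd_add_right (dvd_mul_left j (a + b))).mp h1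
  rcases Nat.eq_zero_or_pos a with h0 | hpos
  · left
    subst h0
    refine ⟨rfl, ?_⟩
    have hb' : b * j = (j + 1) * j := by simpa using h
    exact Nat.eq_of_mul_eq_mul_right (by omega) hb'
  · right
    have haj : a = j := le_antisymm ha (Nat.le_of_dvd hpos hd)
    subst haj
    refine ⟨rfl, ?_⟩
    have h2 : a * (a + 1) + b * a = a * (a + 1) + 0 := by
      rw [add_zero, h]; ring
    have hbj : b * a = 0 := Nat.add_left_cancel h2
    rcases Nat.mul_eq_zero.mp hbj with h0 | h0 <;> omega

lemma filter_all {s : Finset ℕ} {p : ℕ → Prop} [DecidablePred p]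
    (h : (s.filter p).card = s.card) : ∀ x ∈ s, p x := by
  have heq : s.filter p = s :=
    Finset.eq_of_subset_of_card_le (Finset.filter_subset p s) (le_of_eq h.symm)
  intro x hx
  exact (Finset.mem_filter.mp (heq.symm ▸ hx)).2

lemma filter_none {s : Finset ℕ} {p : ℕ → Prop} [DecidablePred p]
    (h : (s.filter p).card = 0) : ∀ x ∈ s, ¬ p x := by
  rw [Finset.card_eq_zero, Finset.filter_eq_empty_iff] at h
  exact h

lemma hasType_of_balanced (i : ℕ) (hi : 3 ≤ i) (g : ℕ → Bool)
    (h : Nload i g = i * (i - 1)) : HasType g i := by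
  have hcard1 : (Finset.Icc 1 (i - 1)).card = i - 1 := by rw [Nat.card_Icc]; omega
  have hcard2 : (Finset.Icc i (2 * i - 1)).card = i := by rw [Nat.card_Icc]; omega
  have h1mem : (1 : ℕ) ∈ Finset.Icc 1 (i - 1) := by simp [Finset.mem_Icc]; omega
  have himem : i ∈ Finset.Icc i (2 * i - 1) := by simp [Finset.mem_Icc]; omega
  rcases balanced i (acnt i g) (bcnt i g) hi (acnt_le i g) (bcnt_le i (by omega) g) h with
    ⟨ha, hb⟩ | ⟨ha, hb⟩
  · -- a = 0, b = i : big jobs all false, small jobs all true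
    have hnone : ∀ x ∈ Finset.Icc 1 (i - 1), ¬ (g x = true) := filter_none (by
      unfold acnt at ha; exact ha)
    have hall : ∀ x ∈ Finset.Icc i (2 * i - 1), g x = true := filter_all (by
      unfold bcnt at hb; rw [hb, hcard2])
    have hg1 : g 1 = false := by
      have := hnone 1 h1mem; simp at this; exact this
    refine ⟨?_, ?_⟩
    · intro j h2 hj
      have hjm : j ∈ Finset.Icc 1 (i - 1) := by simp [Finset.mem_Icc]; omega
      have := hnone j hjm; simp at this
      rw [this, hg1]
    · rw [hall i himem, hg1]; simp
  · -- a = i - 1, b = 0 : big jobs all true, small jobs all false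
    have hall : ∀ x ∈ Finset.Icc 1 (i - 1), g x = true := filter_all (by
      unfold acnt at ha; rw [ha, hcard1])
    have hnone : ∀ x ∈ Finset.Icc i (2 * i - 1), ¬ (g x = true) := filter_none (by
      unfold bcnt at hb; exact hb)
    have hg1 : g 1 = true := hall 1 h1mem
    refine ⟨?_, ?_⟩
    · intro j h2 hj
      have hjm : j ∈ Finset.Icc 1 (i - 1) := by simp [Finset.mem_Icc]; omega
      rw [hall j hjm, hg1]
    · have := hnone i himem; simp at this
      rw [this, hg1]; simp

lemma makespan_lb (i : ℕ) (hi : 3 ≤ i) (g : ℕ → Bool) (hne : ¬ HasType g i) :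
    i * (i - 1) + 1 ≤ max (Nload i g) (Nload i (fun j => !g j)) := by
  by_contra hcon
  push_neg at hcon
  apply hne
  apply hasType_of_balanced i hi g
  have hsum := sum_loads i hi g
  have hm1 : Nload i g ≤ max (Nload i g) (Nload i (fun j => !g j)) := le_max_left _ _
  have hm2 : Nload i (fun j => !g j) ≤ max (Nload i g) (Nload i (fun j => !g j)) :=
    le_max_right _ _
  generalize hP : i * (i - 1) = P at hcon hsum ⊢
  omega

lemma opt_lb (i : ℕ) (hi : 3 ≤ i) (g : ℕ → Bool) :
    i * (i - 1) ≤ max (Nload i g) (Nload i (fun j => !g j)) := by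
  have hsum := sum_loads i hi g
  have hm1 : Nload i g ≤ max (Nload i g) (Nload i (fun j => !g j)) := le_max_left _ _
  have hm2 : Nload i (fun j => !g j) ≤ max (Nload i g) (Nload i (fun j => !g j)) :=
    le_max_right _ _
  generalize hP : i * (i - 1) = P at hsum ⊢
  omega

lemma hasType_unique (g : ℕ → Bool) (i i' : ℕ) (hi : 2 ≤ i) (hi' : 2 ≤ i')
    (h : HasType g i) (h' : HasType g i') : i = i' := by
  by_contra hne
  rcases Nat.lt_or_ge i i' with hlt | hge
  · exact h.2 (h'.1 i hi hlt)
  · exact h'.2 (h.1 i' hi' (by omega))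

lemma exists_untyped (M : ℕ) (hM : 1 ≤ M) (sols : Fin M → ℕ → Bool) :
    ∃ i, 3 ≤ i ∧ i ≤ M + 3 ∧ ∀ k, ¬ HasType (sols k) i := by
  by_contra hcon
  push_neg at hcon
  classical
  have hex : ∀ i : ℕ, ∃ k : Fin M, (3 ≤ i → i ≤ M + 3 → HasType (sols k) i) := by
    intro i
    by_cases h3 : 3 ≤ i ∧ i ≤ M + 3
    · obtain ⟨k, hk⟩ := hcon i h3.1 h3.2
      exact ⟨k, fun _ _ => hk⟩
    · exact ⟨⟨0, hM⟩, fun h1 h2 => absurd ⟨h1, h2⟩ h3⟩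
  choose F hF using hex
  have hinj : Set.InjOn F (Finset.Icc 3 (M + 3)) := by
    intro i hi i' hi' heq
    simp only [Finset.coe_Icc, Set.mem_Icc] at hi hi'
    have h1 : HasType (sols (F i)) i := hF i hi.1 hi.2
    have h2 : HasType (sols (F i)) i' := by rw [heq]; exact hF i' hi'.1 hi'.2
    exact hasType_unique (sols (F i)) i i' (by omega) (by omega) h1 h2
  have hcard := Finset.card_le_card_of_injOn F
    (fun x _ => Finset.mem_univ (F x)) hinj
  rw [Nat.card_Icc, Finset.card_univ, Fintype.card_fin] at hcard
  omega


/-- Multi-solution lower bound for two machines: for any `M ≥ 1` fixed ordinal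
solutions (each a partition of the positive job indexes into two machines, encoded
by a Boolean function), there exist `3 ≤ i ≤ M + 3` and an input realization
(`i - 1` jobs of size `i`, then `i` jobs of size `i - 1`, then zeros) such that
every one of the `M` solutions has makespan at least `i(i-1) + 1`, while the
optimal offline makespan equals `i(i-1)`; consequently the competitive ratio is at
least `1 + 1/((M+2)(M+3))`. -/
theorem stmt_17 (M : ℕ) (hM : 1 ≤ M) (sols : Fin M → ℕ → Bool) :
    ∃ i : ℕ, 3 ≤ i ∧ i ≤ M + 3 ∧
      ∃ p : ℕ → ℝ,
        (∀ j : ℕ, 1 ≤ j → j ≤ i - 1 → p j = (i : ℝ)) ∧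
        (∀ j : ℕ, i ≤ j → j ≤ 2 * i - 1 → p j = (i : ℝ) - 1) ∧
        (∀ j : ℕ, 2 * i - 1 < j → p j = 0) ∧
        (∀ k : Fin M,
          ((i : ℝ) * ((i : ℝ) - 1) + 1) ≤
            max (∑' j : ℕ, if sols k (j + 1) then p (j + 1) else 0)
                (∑' j : ℕ, if sols k (j + 1) then 0 else p (j + 1))) ∧
        (∃ g : ℕ → Bool,
          max (∑' j : ℕ, if g (j + 1) then p (j + 1) else 0)
              (∑' j : ℕ, if g (j + 1) then 0 else p (j + 1))
            = (i : ℝ) * ((i : ℝ) - 1)) ∧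
        (∀ g : ℕ → Bool,
          (i : ℝ) * ((i : ℝ) - 1) ≤
            max (∑' j : ℕ, if g (j + 1) then p (j + 1) else 0)
                (∑' j : ℕ, if g (j + 1) then 0 else p (j + 1))) ∧
        (1 + 1 / (((M : ℝ) + 2) * ((M : ℝ) + 3)) ≤
          ((i : ℝ) * ((i : ℝ) - 1) + 1) / ((i : ℝ) * ((i : ℝ) - 1))) := by
  obtain ⟨i, h3, hiM, huntyped⟩ := exists_untyped M hM sols
  have h1i : (1 : ℕ) ≤ i := by omega
  have hcast : ((i - 1 : ℕ) : ℝ) = (i : ℝ) - 1 := by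
    push_cast [Nat.cast_sub h1i]; ring
  have hcastP : ((i * (i - 1) : ℕ) : ℝ) = (i : ℝ) * ((i : ℝ) - 1) := by
    push_cast [Nat.cast_sub h1i]; ring
  refine ⟨i, h3, hiM, pfun i, ?_, ?_, ?_, ?_, ?_, ?_, ?_⟩
  · intro j hj1 hj2
    unfold pfun
    rw [if_neg (by omega), if_pos (by omega)]
  · intro j hj1 hj2
    unfold pfun
    rw [if_neg (by omega), if_neg (by omega), if_pos (by omega)]
  · intro j hj
    unfold pfun
    rw [if_neg (by omega), if_neg (by omega), if_neg (by omega)]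
  · -- every solution has makespan ≥ i(i-1)+1
    intro k
    have hflip : (∑' j : ℕ, if sols k (j + 1) then 0 else pfun i (j + 1))
        = ((Nload i (fun j => !sols k j) : ℕ) : ℝ) := by
      have he : (∑' j : ℕ, if sols k (j + 1) then 0 else pfun i (j + 1))
          = ∑' j : ℕ, if (!sols k (j + 1)) then pfun i (j + 1) else 0 := by
        apply tsum_congr; intro j
        cases hg : sols k (j + 1) <;> simp [hg]
      rw [he]
      exact load_eq i h3 (fun j => !sols k j)
    rw [load_eq i h3 (sols k), hflip, ← Nat.cast_max]
    have hlb := makespan_lb i h3 (sols k) (huntyped k)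
    calc (i : ℝ) * ((i : ℝ) - 1) + 1 = ((i * (i - 1) + 1 : ℕ) : ℝ) := by
          push_cast [Nat.cast_sub h1i]; ring
      _ ≤ _ := Nat.cast_le.mpr hlb
  · -- optimal assignment
    refine ⟨fun j => decide (j ≤ i - 1), ?_⟩
    set g0 : ℕ → Bool := fun j => decide (j ≤ i - 1) with hg0
    have ha : acnt i g0 = i - 1 := by
      unfold acnt
      rw [Finset.filter_true_of_mem, Nat.card_Icc]
      · omega
      · intro x hx
        simp only [Finset.mem_Icc] at hx
        simp [hg0, hx.2]
    have hb : bcnt i g0 = 0 := by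
      unfold bcnt
      rw [Finset.filter_false_of_mem, Finset.card_empty]
      intro x hx
      simp only [Finset.mem_Icc] at hx
      simp [hg0]; omega
    have ha' : acnt i (fun j => !g0 j) = 0 := by
      have := acnt_not i g0; omega
    have hb' : bcnt i (fun j => !g0 j) = i := by
      have := bcnt_not i h1i g0; omega
    have hN1 : Nload i g0 = i * (i - 1) := by
      unfold Nload; rw [ha, hb, Nat.zero_mul, Nat.add_zero, Nat.mul_comm]
    have hN2 : Nload i (fun j => !g0 j) = i * (i - 1) := by
      unfold Nload; rw [ha', hb', Nat.zero_mul, Nat.zero_add]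
    have hflip : (∑' j : ℕ, if g0 (j + 1) then 0 else pfun i (j + 1))
        = ((Nload i (fun j => !g0 j) : ℕ) : ℝ) := by
      have he : (∑' j : ℕ, if g0 (j + 1) then 0 else pfun i (j + 1))
          = ∑' j : ℕ, if (!g0 (j + 1)) then pfun i (j + 1) else 0 := by
        apply tsum_congr; intro j
        cases hg : g0 (j + 1) <;> simp [hg]
      rw [he]
      exact load_eq i h3 (fun j => !g0 j)
    rw [load_eq i h3 g0, hflip, hN1, hN2, max_self, hcastP]
  · -- lower bound for every assignment
    intro g
    have hflip : (∑' j : ℕ, if g (j + 1) then 0 else pfun i (j + 1))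
        = ((Nload i (fun j => !g j) : ℕ) : ℝ) := by
      have he : (∑' j : ℕ, if g (j + 1) then 0 else pfun i (j + 1))
          = ∑' j : ℕ, if (!g (j + 1)) then pfun i (j + 1) else 0 := by
        apply tsum_congr; intro j
        cases hg : g (j + 1) <;> simp [hg]
      rw [he]
      exact load_eq i h3 (fun j => !g j)
    rw [load_eq i h3 g, hflip, ← Nat.cast_max, ← hcastP]
    exact Nat.cast_le.mpr (opt_lb i h3 g)
  · -- ratio bound
    have hi3 : (3 : ℝ) ≤ (i : ℝ) := by exact_mod_cast h3
    have hiM' : (i : ℝ) ≤ (M : ℝ) + 3 := by exact_mod_cast hiM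
    have hpos : (0 : ℝ) < (i : ℝ) * ((i : ℝ) - 1) := by nlinarith
    have hle : (i : ℝ) * ((i : ℝ) - 1) ≤ ((M : ℝ) + 2) * ((M : ℝ) + 3) := by nlinarith
    have heq : ((i : ℝ) * ((i : ℝ) - 1) + 1) / ((i : ℝ) * ((i : ℝ) - 1))
        = 1 + 1 / ((i : ℝ) * ((i : ℝ) - 1)) := by
      rw [add_div, div_self hpos.ne']
    rw [heq]
    have hdiv : 1 / (((M : ℝ) + 2) * ((M : ℝ) + 3)) ≤ 1 / ((i : ℝ) * ((i : ℝ) - 1)) :=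
      one_div_le_one_div_of_le hpos hle
    linarith
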